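/- For a bipartite pure state |ψ⟩_{AE} purifying ρ_A, after Alice's projective measurement in the basis {|i⟩}, the conditional entropy of the post-measurement classical-quantum state equals S(ρ_A^diag) − S(ρ_A), where ρ_A^diag is the dephased (diagonal part of) ρ_A; i.e., the quantum intrinsic randomness equals the relative entropy of coherence S(ρ_A ‖ ρ_A^diag). -/

import Mathlib

open Matrix

/-- The von Neumann entropy of a Hermitian matrix, S(ρ) = -Σᵢ λᵢ log λᵢ. -/
noncomputable def vNEntropy {m : Type*} [Fintype m] [DecidableEq m]
    (ρ : Matrix m m ℂ) (h : ρ.IsHermitian) : ℝ :=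
  -∑ i, h.eigenvalues i * Real.log (h.eigenvalues i)

namespace VNAux

open Polynomial

variable {m n : Type*} [Fintype m] [DecidableEq m] [Fintype n] [DecidableEq n]

lemma map_C_mul (A B : Matrix m m ℂ) :
    (A * B).map (C : ℂ →+* ℂ[X]) = A.map (C : ℂ →+* ℂ[X]) * B.map (C : ℂ →+* ℂ[X]) := by
  simpa only [RingHom.mapMatrix_apply] using
    map_mul ((C : ℂ →+* ℂ[X]).mapMatrix) A B

lemma map_C_one : (1 : Matrix m m ℂ).map (C : ℂ →+* ℂ[X]) = 1 := by
  simpa only [RingHom.mapMatrix_apply] using _root_.map_one ((C : ℂ →+* ℂ[X]).mapMatrix)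

lemma charmatrix_conj (P M Q : Matrix m m ℂ) (hPQ : P * Q = 1) :
    charmatrix (P * M * Q) = P.map (C : ℂ →+* ℂ[X]) * charmatrix M * Q.map (C : ℂ →+* ℂ[X]) := by
  unfold charmatrix
  rw [mul_sub, sub_mul]
  have hs : P.map (C : ℂ →+* ℂ[X]) * Matrix.scalar m (X : ℂ[X]) * Q.map (C : ℂ →+* ℂ[X])
      = Matrix.scalar m (X : ℂ[X]) := by
    rw [scalar_apply, ← smul_one_eq_diagonal, mul_smul_comm, smul_mul_assoc, mul_one,
      ← map_C_mul, hPQ, map_C_one]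
  rw [hs]
  congr 1
  simp only [RingHom.mapMatrix_apply, map_C_mul]

lemma charpoly_conj (P M Q : Matrix m m ℂ) (hPQ : P * Q = 1) :
    (P * M * Q).charpoly = M.charpoly := by
  unfold Matrix.charpoly
  rw [charmatrix_conj P M Q hPQ, det_mul, det_mul]
  have : (P.map (C : ℂ →+* ℂ[X])).det * (Q.map (C : ℂ →+* ℂ[X])).det = 1 := by
    rw [← det_mul, ← map_C_mul, hPQ, map_C_one, det_one]
  calc (P.map (C : ℂ →+* ℂ[X])).det * (charmatrix M).det * (Q.map (C : ℂ →+* ℂ[X])).det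
      = (charmatrix M).det * ((P.map (C : ℂ →+* ℂ[X])).det * (Q.map (C : ℂ →+* ℂ[X])).det) := by
        ring
    _ = (charmatrix M).det := by rw [this, mul_one]

lemma charpoly_diag (f : m → ℂ) :
    (diagonal f).charpoly = ∏ i, (X - C (f i)) := by
  have : charmatrix (diagonal f) = diagonal (fun i => X - C (f i)) := by
    ext i j
    by_cases h : i = j
    · subst h; simp
    · simp [h, diagonal_apply_ne _ h]
  rw [Matrix.charpoly, this, det_diagonal]

lemma charpoly_zero_mat : (0 : Matrix m m ℂ).charpoly = X ^ (Fintype.card m) := by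
  have : (0 : Matrix m m ℂ) = diagonal (fun _ => (0 : ℂ)) := by simp
  rw [this, charpoly_diag]
  simp [Finset.prod_const, Finset.card_univ]

/-- Sylvester: charpoly(AB)·Xⁿ = charpoly(BA)·Xᵐ for rectangular A, B. -/
lemma charpoly_mul_comm (A : Matrix m n ℂ) (B : Matrix n m ℂ) :
    (A * B).charpoly * X ^ (Fintype.card n) = (B * A).charpoly * X ^ (Fintype.card m) := by
  classical
  set P : Matrix (m ⊕ n) (m ⊕ n) ℂ := fromBlocks 1 A 0 1 with hP
  set Q : Matrix (m ⊕ n) (m ⊕ n) ℂ := fromBlocks 1 (-A) 0 1 with hQ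
  have hQP : Q * P = 1 := by
    simp [hP, hQ, fromBlocks_multiply, ← fromBlocks_one]
  have hPQ : P * Q = 1 := by
    simp [hP, hQ, fromBlocks_multiply, ← fromBlocks_one]
  have key : Q * (fromBlocks (A * B) 0 B 0) * P = fromBlocks 0 0 B (B * A) := by
    simp only [hP, hQ, fromBlocks_multiply, Matrix.mul_one, Matrix.one_mul,
      Matrix.mul_zero, Matrix.zero_mul, add_zero, zero_add, Matrix.neg_mul, Matrix.mul_assoc]
    congr 1 <;> simp
  have h1 : (fromBlocks 0 0 B (B * A) : Matrix (m ⊕ n) (m ⊕ n) ℂ).charpoly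
      = (fromBlocks (A * B) 0 B 0 : Matrix (m ⊕ n) (m ⊕ n) ℂ).charpoly := by
    rw [← key]; exact charpoly_conj Q _ P hQP
  rw [charpoly_fromBlocks_zero₁₂, charpoly_fromBlocks_zero₁₂] at h1
  rw [charpoly_zero_mat, charpoly_zero_mat] at h1
  rw [mul_comm] at h1
  exact h1.symm

lemma charpoly_transpose (M : Matrix m m ℂ) : Mᵀ.charpoly = M.charpoly := by
  have : charmatrix Mᵀ = (charmatrix M)ᵀ := by
    ext i j
    by_cases h : i = j
    · subst h; simp
    · simp [h, Ne.symm h]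
  rw [Matrix.charpoly, this, det_transpose, Matrix.charpoly]

lemma charpoly_blockDiag {o : Type*} [Fintype o] [DecidableEq o]
    (B : o → Matrix m m ℂ) :
    (blockDiagonal B).charpoly = ∏ i, (B i).charpoly := by
  have h1 : charmatrix (blockDiagonal B) = blockDiagonal (fun i => charmatrix (B i)) := by
    unfold charmatrix
    have h2 : (blockDiagonal B).map ((C : ℂ →+* ℂ[X]) : ℂ → ℂ[X])
        = blockDiagonal (fun i => (B i).map (C : ℂ →+* ℂ[X])) :=
      blockDiagonal_map B _ (map_zero C)
    have h3 : (Matrix.scalar (m × o)) (X : ℂ[X])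
        = blockDiagonal (fun _ : o => (Matrix.scalar m) (X : ℂ[X])) := by
      ext ⟨i, k⟩ ⟨j, l⟩
      by_cases hkl : k = l
      · subst hkl
        by_cases hij : i = j
        · subst hij; simp [Matrix.blockDiagonal_apply]
        · simp [Matrix.blockDiagonal_apply, Matrix.scalar_apply, Matrix.diagonal_apply,
            Prod.ext_iff, hij]
      · simp [Matrix.blockDiagonal_apply, Matrix.scalar_apply, Matrix.diagonal_apply,
          Prod.ext_iff, hkl]
    rw [RingHom.mapMatrix_apply, h2, h3, ← blockDiagonal_sub]
    congr 1
  rw [Matrix.charpoly, h1, det_blockDiagonal]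
  rfl

lemma charpoly_hermitian {A : Matrix m m ℂ} (hA : A.IsHermitian) :
    A.charpoly = ∏ i, (X - C ((hA.eigenvalues i : ℝ) : ℂ)) := by
  conv_lhs => rw [hA.spectral_theorem]
  have hu : (hA.eigenvectorUnitary : Matrix m m ℂ) * star (hA.eigenvectorUnitary : Matrix m m ℂ)
      = 1 := (Matrix.mem_unitaryGroup_iff).mp hA.eigenvectorUnitary.2
  rw [Unitary.conjStarAlgAut_apply, charpoly_conj _ _ _ hu, charpoly_diag]
  rfl

/-- Von Neumann entropy expressed through the roots of the characteristic polynomial. -/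
lemma entropy_eq_roots {A : Matrix m m ℂ} (hA : A.IsHermitian) :
    vNEntropy A hA = -((A.charpoly.roots).map (fun z => z.re * Real.log z.re)).sum := by
  have hr : A.charpoly.roots = Finset.univ.val.map (fun i => ((hA.eigenvalues i : ℝ) : ℂ)) := by
    rw [charpoly_hermitian hA]
    have : (∏ i, (X - C ((hA.eigenvalues i : ℝ) : ℂ)))
        = ((Finset.univ.val.map fun i => ((hA.eigenvalues i : ℝ) : ℂ)).map
            fun a => X - C a).prod := by
      rw [Multiset.map_map]
      rfl
    rw [this, roots_multiset_prod_X_sub_C]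
  rw [hr, Multiset.map_map]
  unfold vNEntropy
  rw [Finset.sum_eq_multiset_sum]
  congr 1

lemma entropy_eq_of_charpoly (A : Matrix m m ℂ) (B : Matrix n n ℂ)
    (hA : A.IsHermitian) (hB : B.IsHermitian) (a b : ℕ)
    (h : X ^ a * A.charpoly = X ^ b * B.charpoly) :
    vNEntropy A hA = vNEntropy B hB := by
  have hroots : (X ^ a * A.charpoly : ℂ[X]).roots = (X ^ b * B.charpoly).roots := by rw [h]
  rw [roots_mul (mul_ne_zero (pow_ne_zero _ X_ne_zero) (charpoly_monic A).ne_zero),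
    roots_mul (mul_ne_zero (pow_ne_zero _ X_ne_zero) (charpoly_monic B).ne_zero),
    roots_pow, roots_pow, roots_X] at hroots
  have key : ∀ (k : ℕ) (s : Multiset ℂ),
      (((k • ({0} : Multiset ℂ)) + s).map (fun z : ℂ => z.re * Real.log z.re)).sum
        = (s.map (fun z : ℂ => z.re * Real.log z.re)).sum := by
    intro k s
    rw [Multiset.map_add, Multiset.sum_add, Multiset.nsmul_singleton, Multiset.map_replicate,
      Multiset.sum_replicate]
    simp
  rw [entropy_eq_roots hA, entropy_eq_roots hB]
  have := congrArg (fun s : Multiset ℂ => (s.map (fun z : ℂ => z.re * Real.log z.re)).sum) hroots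
  simp only [key] at this
  rw [this]

end VNAux

/-- For a bipartite pure state ψ_{AE} purifying ρ_A, after Alice's projective
measurement in the basis {|i⟩}, the conditional entropy of the post-measurement
classical-quantum state, S(ρ'_{AE}) − S(ρ_E), equals S(ρ_A^diag) − S(ρ_A), the
relative entropy of coherence of ρ_A. -/
theorem intrinsic_randomness_eq_relative_entropy_of_coherence
    (d dE : ℕ) (ψ : Fin d → Fin dE → ℂ)
    (ρA : Matrix (Fin d) (Fin d) ℂ)
    (hpur : ∀ i j, ρA i j = ∑ k, ψ i k * (starRingEnd ℂ) (ψ j k))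
    (ρdiag : Matrix (Fin d) (Fin d) ℂ)
    (hdiag : ρdiag = Matrix.diagonal fun i => ρA i i)
    (ρ' : Matrix (Fin d × Fin dE) (Fin d × Fin dE) ℂ)
    (hpost : ∀ ik jl : Fin d × Fin dE,
      ρ' ik jl = if ik.1 = jl.1 then ψ ik.1 ik.2 * (starRingEnd ℂ) (ψ jl.1 jl.2) else 0)
    (ρE : Matrix (Fin dE) (Fin dE) ℂ)
    (hE : ∀ k l, ρE k l = ∑ i, ψ i k * (starRingEnd ℂ) (ψ i l))
    (hA : ρA.IsHermitian) (hD : ρdiag.IsHermitian) (h' : ρ'.IsHermitian)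
    (hEh : ρE.IsHermitian) :
    vNEntropy ρ' h' - vNEntropy ρE hEh = vNEntropy ρdiag hD - vNEntropy ρA hA := by
  classical
  -- The matrix M with M i k = ψ i k
  set M : Matrix (Fin d) (Fin dE) ℂ := Matrix.of ψ with hM
  have hρA : ρA = M * Mᴴ := by
    ext i j
    rw [hpur]
    simp [Matrix.mul_apply, Matrix.conjTranspose_apply, hM]
  have hρE : ρE = (Mᴴ * M)ᵀ := by
    ext k l
    rw [Matrix.transpose_apply, hE]
    simp only [Matrix.mul_apply, Matrix.conjTranspose_apply, hM, Matrix.of_apply]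
    exact Finset.sum_congr rfl fun i _ => by rw [mul_comm, Complex.star_def]
  -- S(ρE) = S(ρA)
  have e1 : vNEntropy ρE hEh = vNEntropy ρA hA := by
    apply VNAux.entropy_eq_of_charpoly _ _ _ _ d dE
    have h := VNAux.charpoly_mul_comm M Mᴴ
    simp only [Fintype.card_fin] at h
    rw [hρE, VNAux.charpoly_transpose, hρA]
    linear_combination -h
  -- the diagonal blocks of ρ'
  set Bk : Fin d → Matrix (Fin dE) (Fin dE) ℂ :=
    fun i => Matrix.of fun k l => ψ i k * (starRingEnd ℂ) (ψ i l) with hBk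
  have hρ' : ρ' = (Matrix.blockDiagonal Bk).reindex (Equiv.prodComm (Fin dE) (Fin d))
      (Equiv.prodComm (Fin dE) (Fin d)) := by
    ext ⟨i, k⟩ ⟨j, l⟩
    rw [hpost]
    simp only [Matrix.reindex_apply, Matrix.submatrix_apply, Equiv.prodComm_symm,
      Equiv.prodComm_apply, Prod.swap_prod_mk, Matrix.blockDiagonal_apply, hBk, Matrix.of_apply]
    by_cases h : i = j
    · subst h; simp
    · simp [h]
  have c1 : ρ'.charpoly = ∏ i, (Bk i).charpoly := by
    rw [hρ', Matrix.charpoly_reindex, VNAux.charpoly_blockDiag]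
  have hAii : ∀ i, ρA i i = ∑ k, ψ i k * (starRingEnd ℂ) (ψ i k) := fun i => hpur i i
  have cB : ∀ i, (Polynomial.X : Polynomial ℂ) * (Bk i).charpoly
      = Polynomial.X ^ dE * (Polynomial.X - Polynomial.C (ρA i i)) := by
    intro i
    set u : Matrix (Fin dE) (Fin 1) ℂ := Matrix.of fun k _ => ψ i k with hu
    set v : Matrix (Fin 1) (Fin dE) ℂ := Matrix.of fun _ l => (starRingEnd ℂ) (ψ i l) with hv
    have hBuv : Bk i = u * v := by
      ext k l
      simp [hBk, hu, hv, Matrix.mul_apply]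
    have h := VNAux.charpoly_mul_comm u v
    simp only [Fintype.card_fin, pow_one] at h
    have hvu : v * u = Matrix.diagonal (fun _ : Fin 1 => ρA i i) := by
      ext a b
      have ha : a = 0 := Subsingleton.elim a 0
      have hb : b = 0 := Subsingleton.elim b 0
      subst ha; subst hb
      rw [Matrix.mul_apply, Matrix.diagonal_apply_eq, hAii i]
      exact Finset.sum_congr rfl fun k _ => by simp [hu, hv, mul_comm]
    have hcvu : (v * u).charpoly = Polynomial.X - Polynomial.C (ρA i i) := by
      rw [hvu, VNAux.charpoly_diag]
      simp
    rw [hcvu] at h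
    rw [hBuv]
    linear_combination h
  have c2 : (Polynomial.X : Polynomial ℂ) ^ d * ρ'.charpoly
      = Polynomial.X ^ (dE * d) * ρdiag.charpoly := by
    rw [c1, hdiag, VNAux.charpoly_diag]
    calc (Polynomial.X : Polynomial ℂ) ^ d * ∏ i, (Bk i).charpoly
        = ∏ i : Fin d, (Polynomial.X * (Bk i).charpoly) := by
          rw [Finset.prod_mul_distrib, Finset.prod_const, Finset.card_univ, Fintype.card_fin]
      _ = ∏ i : Fin d, (Polynomial.X ^ dE * (Polynomial.X - Polynomial.C (ρA i i))) :=
          Finset.prod_congr rfl fun i _ => cB i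
      _ = Polynomial.X ^ (dE * d) * ∏ i, (Polynomial.X - Polynomial.C (ρA i i)) := by
          rw [Finset.prod_mul_distrib, Finset.prod_const, Finset.card_univ, Fintype.card_fin,
            ← pow_mul]
  have e2 : vNEntropy ρ' h' = vNEntropy ρdiag hD :=
    VNAux.entropy_eq_of_charpoly _ _ _ _ d (dE * d) c2
  rw [e1, e2]
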